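/- Let p > 1 satisfy (1 − 2^{−p}) ζ(p) > 2^{p−1} (1/2 + 1/(2^p − 1)). Then there exists a positive integer N ≥ 7 such that n^{−1/p} ‖T_n‖_p ≤ 4 (1/2 + 1/(2^p − 1))^{1/p} for all 1 ≤ n ≤ N, and n^{−1/p} ‖T_n‖_p ≥ 4 (1/2 + 1/(2^p − 1))^{1/p} for all n ≥ N + 1. -/

import Mathlib

set_option maxHeartbeats 1000000

open Finset Real Filter Topology

/-- The n×n Cauchy–Toeplitz matrix `T_n = [2/(1+2(i-j))]`. -/
noncomputable def cauchyToeplitz (n : ℕ) : Matrix (Fin n) (Fin n) ℝ :=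
  fun i j => 2 / (1 + 2 * (((i : ℕ) : ℝ) - ((j : ℕ) : ℝ)))

/-- The ℓ_p norm of `T_n`: `(∑_{i,j} |a_{ij}|^p)^(1/p)`. -/
noncomputable def lpNorm (n : ℕ) (p : ℝ) : ℝ :=
  (∑ i : Fin n, ∑ j : Fin n, |cauchyToeplitz n i j| ^ p) ^ (1 / p)

/-- The ℓ_{p,q} norm of `T_n`: `(∑_j (∑_i |a_{ij}|^p)^(q/p))^(1/q)`. -/
noncomputable def lpqNorm (n : ℕ) (p q : ℝ) : ℝ :=
  (∑ j : Fin n, (∑ i : Fin n, |cauchyToeplitz n i j| ^ p) ^ (q / p)) ^ (1 / q)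

/-- The Riemann zeta function at a real argument (real-valued for real `p > 1`). -/
noncomputable def zetaR (p : ℝ) : ℝ := (riemannZeta p).re

noncomputable def uu (p : ℝ) (d : ℕ) : ℝ := (2 / (2 * (d:ℝ) + 1)) ^ p
noncomputable def EE (p : ℝ) (i j : ℕ) : ℝ := |2 / (1 + 2 * ((i:ℝ) - (j:ℝ)))| ^ p
noncomputable def PP (p : ℝ) (n : ℕ) : ℝ := ∑ d ∈ Finset.range n, uu p d
noncomputable def gg (p : ℝ) (n : ℕ) : ℝ := ∑ i : Fin n, ∑ j : Fin n, EE p i j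

lemma gg_eq (p : ℝ) (n : ℕ) :
    gg p n = ∑ i : Fin n, ∑ j : Fin n, |cauchyToeplitz n i j| ^ p := rfl

lemma EE_of_le (p : ℝ) {i j : ℕ} (h : j ≤ i) : EE p i j = uu p (i - j) := by
  unfold EE uu
  congr 1
  have : (i:ℝ) - (j:ℝ) = ((i - j : ℕ) : ℝ) := by push_cast [Nat.cast_sub h]; ring
  rw [this, abs_of_pos (by positivity)]
  ring_nf

lemma EE_of_gt (p : ℝ) {i j : ℕ} (h : i < j) : EE p i j = uu p (j - i - 1) := by
  unfold EE uu
  congr 1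
  have hc : ((j - i - 1 : ℕ) : ℝ) = (j:ℝ) - (i:ℝ) - 1 := by
    rw [Nat.sub_sub, Nat.cast_sub (by omega : i + 1 ≤ j)]; push_cast; ring
  rw [hc]
  have hneg : 1 + 2 * ((i:ℝ) - (j:ℝ)) < 0 := by
    have : (i:ℝ) + 1 ≤ (j:ℝ) := by exact_mod_cast h
    linarith
  rw [abs_div, abs_of_pos (by norm_num : (0:ℝ) < 2), abs_of_neg hneg]
  congr 1; ring

lemma row_sum (p : ℝ) (n : ℕ) : ∑ j ∈ Finset.range (n+1), EE p n j = PP p (n+1) := by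
  have h1 : ∀ j ∈ Finset.range (n+1), EE p n j = uu p (n - j) := by
    intro j hj; exact EE_of_le p (by simp at hj; omega)
  rw [Finset.sum_congr rfl h1]
  have := Finset.sum_range_reflect (fun d => uu p d) (n+1)
  simpa [PP] using this

lemma col_sum (p : ℝ) (n : ℕ) : ∑ i ∈ Finset.range n, EE p i n = PP p n := by
  have h1 : ∀ i ∈ Finset.range n, EE p i n = uu p (n - i - 1) := by
    intro i hi; exact EE_of_gt p (by simp at hi; omega)
  rw [Finset.sum_congr rfl h1]
  rw [show (fun i => uu p (n - i - 1)) = fun i => uu p (n - 1 - i) from by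
    funext i; congr 1; omega]
  exact Finset.sum_range_reflect (fun d => uu p d) n

lemma gg_succ (p : ℝ) (n : ℕ) : gg p (n+1) = gg p n + PP p (n+1) + PP p n := by
  unfold gg
  rw [Fin.sum_univ_castSucc]
  have hrow : ∑ j : Fin (n+1), EE p (Fin.last n) j = PP p (n+1) := by
    rw [Fin.sum_univ_eq_sum_range (fun j => EE p (Fin.last n) j)]
    exact row_sum p n
  rw [hrow]
  have hsplit : ∀ i : Fin n, ∑ j : Fin (n+1), EE p (i.castSucc) j
      = (∑ j : Fin n, EE p i j) + EE p i n := by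
    intro i
    rw [Fin.sum_univ_castSucc]
    simp [Fin.coe_castSucc, Fin.val_last]
  rw [Finset.sum_congr rfl (fun i _ => hsplit i), Finset.sum_add_distrib]
  have hcol : ∑ i : Fin n, EE p (i:ℕ) n = PP p n := by
    rw [Fin.sum_univ_eq_sum_range (fun i => EE p i n)]
    exact col_sum p n
  rw [hcol]; ring

lemma uu_pos (p : ℝ) (d : ℕ) : 0 < uu p d := by
  unfold uu; positivity

lemma PP_mono (p : ℝ) : Monotone (PP p) := by
  intro a b hab
  exact Finset.sum_le_sum_of_subset_of_nonneg (Finset.range_subset_range.2 hab)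
    (fun d _ _ => (uu_pos p d).le)

lemma PP_nonneg (p : ℝ) (n : ℕ) : 0 ≤ PP p n :=
  Finset.sum_nonneg fun d _ => (uu_pos p d).le

lemma gg_zero (p : ℝ) : gg p 0 = 0 := by simp [gg]

lemma gg_nonneg (p : ℝ) (n : ℕ) : 0 ≤ gg p n := by
  unfold gg EE
  positivity

lemma gg_sum (p : ℝ) (n : ℕ) :
    gg p n = ∑ m ∈ Finset.range n, (PP p (m+1) + PP p m) := by
  induction n with
  | zero => simp [gg_zero]
  | succ k ih => rw [gg_succ, Finset.sum_range_succ, ih]; ring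

lemma gg_le (p : ℝ) (n : ℕ) : gg p n ≤ n * (PP p (n+1) + PP p n) := by
  rw [gg_sum]
  calc ∑ m ∈ Finset.range n, (PP p (m+1) + PP p m)
      ≤ ∑ _m ∈ Finset.range n, (PP p (n+1) + PP p n) := by
        refine Finset.sum_le_sum fun m hm => ?_
        simp only [Finset.mem_range] at hm
        exact add_le_add (PP_mono p (by omega)) (PP_mono p (by omega))
    _ = n * (PP p (n+1) + PP p n) := by rw [Finset.sum_const, Finset.card_range]; push_cast; ring

lemma gg_lower (p : ℝ) {m n : ℕ} (h : m ≤ n) : 2 * (n - m : ℕ) * PP p m ≤ gg p n := by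
  rw [gg_sum]
  calc (2 * (n - m : ℕ) * PP p m : ℝ)
      = ∑ k ∈ Finset.range n \ Finset.range m, (PP p m + PP p m) := by
        rw [Finset.sum_const, Finset.card_sdiff_of_subset (Finset.range_subset_range.2 h)]
        simp [Finset.card_range]; push_cast; ring
    _ ≤ ∑ k ∈ Finset.range n \ Finset.range m, (PP p (k+1) + PP p k) := by
        refine Finset.sum_le_sum fun k hk => ?_
        simp only [Finset.mem_sdiff, Finset.mem_range, not_lt] at hk
        exact add_le_add (PP_mono p (by omega)) (PP_mono p hk.2)
    _ ≤ ∑ k ∈ Finset.range n, (PP p (k+1) + PP p k) := by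
        refine Finset.sum_le_sum_of_subset_of_nonneg (Finset.sdiff_subset) ?_
        intro k _ _
        exact add_nonneg (PP_nonneg p _) (PP_nonneg p _)

-- monotonicity of f n = gg n / n
lemma ff_mono (p : ℝ) {a b : ℕ} (hab : a ≤ b) : gg p a / a ≤ gg p b / b := by
  induction b with
  | zero => interval_cases a; simp
  | succ k ih =>
    rcases Nat.lt_or_ge a (k+1) with hlt | hge
    · refine le_trans (ih (by omega)) ?_
      rcases Nat.eq_zero_or_pos k with rfl | hk
      · simp only [gg_zero, Nat.cast_zero, div_zero, zero_div]
        have := gg_nonneg p 1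
        positivity
      · rw [div_le_div_iff₀ (by positivity) (by positivity)]
        rw [gg_succ]
        have := gg_le p k
        push_cast
        nlinarith [PP_nonneg p k, PP_nonneg p (k+1),
          PP_mono p (Nat.le_succ k)]
    · have : a = k+1 := by omega
      subst this; rfl

lemma zetaR_eq {p : ℝ} (hp : 1 < p) : zetaR p = ∑' n : ℕ, 1 / (n:ℝ) ^ p := by
  unfold zetaR
  have hs : 1 < (p:ℂ).re := by simpa using hp
  rw [zeta_eq_tsum_one_div_nat_cpow hs]
  have hterm : ∀ n : ℕ, (1 / (n:ℂ) ^ (p:ℂ)) = ((1 / (n:ℝ) ^ p : ℝ) : ℂ) := by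
    intro n
    rw [show ((n:ℂ)) = (((n:ℝ):ℂ)) by push_cast; ring,
      ← Complex.ofReal_cpow (by positivity)]
    push_cast
    ring
  rw [tsum_congr hterm]
  rw [← Complex.ofReal_tsum]
  simp

lemma summable_base {p : ℝ} (hp : 1 < p) : Summable (fun n : ℕ => 1 / (n:ℝ) ^ p) :=
  Real.summable_one_div_nat_rpow.2 hp

lemma summable_even {p : ℝ} (hp : 1 < p) : Summable (fun k : ℕ => 1 / ((2*k : ℕ):ℝ) ^ p) :=
  (summable_base hp).comp_injective (fun a b hab => by omega)

lemma summable_odd {p : ℝ} (hp : 1 < p) : Summable (fun k : ℕ => 1 / ((2*k+1 : ℕ):ℝ) ^ p) :=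
  (summable_base hp).comp_injective (fun a b hab => by omega)

lemma even_tsum {p : ℝ} (hp : 1 < p) :
    ∑' k : ℕ, 1 / ((2*k : ℕ):ℝ) ^ p = (2:ℝ) ^ (-p) * zetaR p := by
  rw [zetaR_eq hp]
  rw [← tsum_mul_left]
  refine tsum_congr fun k => ?_
  push_cast
  rcases Nat.eq_zero_or_pos k with rfl | hk
  · simp [Real.zero_rpow (by positivity : p ≠ 0)]
  · rw [Real.mul_rpow (by norm_num) (by positivity), Real.rpow_neg (by norm_num)]
    field_simp

lemma odd_tsum {p : ℝ} (hp : 1 < p) :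
    ∑' k : ℕ, 1 / ((2*k+1 : ℕ):ℝ) ^ p = (1 - (2:ℝ) ^ (-p)) * zetaR p := by
  have h := tsum_even_add_odd (f := fun n : ℕ => 1/(n:ℝ)^p) (summable_even hp) (summable_odd hp)
  have h2 : (∑' k : ℕ, 1 / ((2*k:ℕ):ℝ) ^ p) + ∑' k : ℕ, 1 / ((2*k+1:ℕ):ℝ) ^ p
      = zetaR p := by
    rw [zetaR_eq hp]; exact h
  rw [even_tsum hp] at h2
  linarith

lemma uu_eq (p : ℝ) (d : ℕ) : uu p d = 2 ^ p * (1 / ((2*d+1 : ℕ):ℝ) ^ p) := by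
  unfold uu
  push_cast
  rw [Real.div_rpow (by norm_num) (by positivity), div_eq_mul_one_div]

lemma uu_funeq (p : ℝ) : uu p = fun d => 2 ^ p * (1 / ((2*d+1 : ℕ):ℝ) ^ p) :=
  funext (uu_eq p)

lemma summable_uu {p : ℝ} (hp : 1 < p) : Summable (uu p) := by
  rw [uu_funeq]
  exact (summable_odd hp).mul_left _

lemma tsum_uu {p : ℝ} (hp : 1 < p) :
    ∑' d : ℕ, uu p d = 2 ^ p * ((1 - (2:ℝ) ^ (-p)) * zetaR p) := by
  rw [uu_funeq, tsum_mul_left, odd_tsum hp]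

lemma uu_le (p : ℝ) (hp : 1 ≤ p) (d : ℕ) : uu p d ≤ 2 ^ p * (1 / (2*(d:ℝ)+1)) := by
  unfold uu
  rw [Real.div_rpow (by norm_num) (by positivity), div_eq_mul_one_div]
  refine mul_le_mul_of_nonneg_left ?_ (by positivity)
  have h1 : (2*(d:ℝ)+1) ^ (1:ℝ) ≤ (2*(d:ℝ)+1) ^ p :=
    Real.rpow_le_rpow_of_exponent_le (by push_cast; linarith [Nat.cast_nonneg (α := ℝ) d]) hp
  rw [Real.rpow_one] at h1
  exact one_div_le_one_div_of_le (by positivity) h1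

lemma sqrt2_le {y : ℝ} (hy : 1 < y) : Real.sqrt 2 ≤ y / 2 + 1 / y := by
  have hs0 : (0:ℝ) < Real.sqrt 2 := by positivity
  have hs2 : Real.sqrt 2 ^ 2 = 2 := Real.sq_sqrt (by norm_num)
  have hy0 : (0:ℝ) < y := by linarith
  rw [show y / 2 + 1 / y = (y^2 + 2) / (2*y) by field_simp, le_div_iff₀ (by linarith)]
  nlinarith [sq_nonneg (y - Real.sqrt 2)]

lemma g7_bound {p : ℝ} (hp : 1 < p) :
    gg p 7 ≤ 7 * ((4:ℝ) ^ p * (1/2 + 1/((2:ℝ)^p - 1))) := by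
  have hexp : gg p 7 = 13 * uu p 0 + 11 * uu p 1 + 9 * uu p 2 + 7 * uu p 3
      + 5 * uu p 4 + 3 * uu p 5 + uu p 6 := by
    rw [gg_sum]
    simp [PP, Finset.sum_range_succ]
    ring
  have hq : gg p 7 ≤ 2 ^ p * (13 + 11/3 + 9/5 + 1 + 5/9 + 3/11 + 1/13 : ℝ) := by
    rw [hexp]
    have h0 := uu_le p hp.le 0
    have h1 := uu_le p hp.le 1
    have h2 := uu_le p hp.le 2
    have h3 := uu_le p hp.le 3
    have h4 := uu_le p hp.le 4
    have h5 := uu_le p hp.le 5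
    have h6 := uu_le p hp.le 6
    push_cast at h0 h1 h2 h3 h4 h5 h6
    norm_num at h0 h1 h2 h3 h4 h5 h6 ⊢
    nlinarith [Real.rpow_pos_of_pos (by norm_num : (0:ℝ) < 2) p]
  set y : ℝ := (2:ℝ)^p - 1 with hy
  have h2p : (2:ℝ) < 2 ^ p := by
    calc (2:ℝ) = 2 ^ (1:ℝ) := (Real.rpow_one 2).symm
    _ < 2 ^ p := Real.rpow_lt_rpow_of_exponent_lt (by norm_num) hp
  have hy1 : 1 < y := by simp only [hy]; linarith
  have hy0 : (0:ℝ) < y := by linarith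
  have h4p : (4:ℝ) ^ p = (y+1) * (y+1) := by
    have : (4:ℝ) ^ p = 2^p * 2^p := by
      rw [← Real.mul_rpow (by norm_num) (by norm_num)]; norm_num
    rw [this]; simp only [hy]; ring
  have hsqrt : Real.sqrt 2 ≤ y / 2 + 1 / y := sqrt2_le hy1
  have hs14 : (1.4142:ℝ) ≤ Real.sqrt 2 := by
    nlinarith [Real.sq_sqrt (by norm_num : (0:ℝ) ≤ 2), Real.sqrt_nonneg 2]
  refine hq.trans ?_
  rw [h4p]
  have hkey : (13 + 11/3 + 9/5 + 1 + 5/9 + 3/11 + 1/13 : ℝ) ≤ 7 * (3/2 + Real.sqrt 2) := by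
    nlinarith
  have hrhs : 7 * ((y+1) * (y+1) * (1/2 + 1/y)) = (y+1) * (7 * (3/2 + (y/2 + 1/y))) := by
    field_simp; ring
  rw [show (2:ℝ)^p = y + 1 by simp [hy]]
  rw [hrhs]
  have hstep : 7 * (3/2 + Real.sqrt 2) ≤ 7 * (3/2 + (y/2 + 1/y)) := by linarith
  calc (y+1) * (13 + 11/3 + 9/5 + 1 + 5/9 + 3/11 + 1/13 : ℝ)
      ≤ (y+1) * (7 * (3/2 + Real.sqrt 2)) := by nlinarith
    _ ≤ (y+1) * (7 * (3/2 + (y/2 + 1/y))) := by nlinarith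

theorem stmt_18 (p : ℝ) (hp : 1 < p)
    (h : 2 ^ (p - 1) * (1 / 2 + 1 / (2 ^ p - 1)) < (1 - 2 ^ (-p)) * zetaR p) :
    ∃ N : ℕ, 7 ≤ N ∧
      (∀ n : ℕ, 1 ≤ n → n ≤ N →
        (n : ℝ) ^ (-(1 / p)) * lpNorm n p ≤ 4 * (1 / 2 + 1 / (2 ^ p - 1)) ^ (1 / p)) ∧
      (∀ n : ℕ, N + 1 ≤ n →
        4 * (1 / 2 + 1 / (2 ^ p - 1)) ^ (1 / p) ≤ (n : ℝ) ^ (-(1 / p)) * lpNorm n p) := by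
  have h2p : (2:ℝ) < 2 ^ p := by
    calc (2:ℝ) = 2 ^ (1:ℝ) := (Real.rpow_one 2).symm
      _ < 2 ^ p := Real.rpow_lt_rpow_of_exponent_lt (by norm_num) hp
  set c : ℝ := 1/2 + 1/((2:ℝ)^p - 1) with hc
  have hcpos : 0 < c := by
    have h1 : (0:ℝ) < 2^p - 1 := by linarith
    rw [hc]; positivity
  set B : ℝ := (4:ℝ) ^ p * c with hBdef
  have hBpos : 0 < B := by positivity
  -- step 1 : B < 2 * tsum uu
  have hB : B < 2 * ∑' d : ℕ, uu p d := by
    rw [tsum_uu hp]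
    have e1 : (2:ℝ)^(p-1) * 2 = 2^p := by
      rw [← Real.rpow_add_one (by norm_num) (p-1)]; ring_nf
    have e2 : (4:ℝ)^p = 2^p * 2^p := by
      rw [← Real.mul_rpow (by norm_num) (by norm_num)]; norm_num
    have hpos : (0:ℝ) < 2^p := by linarith
    calc B = 2 * (2^p * ((2:ℝ)^(p-1) * c)) := by rw [hBdef, e2, ← e1]; ring
      _ < 2 * (2^p * ((1 - (2:ℝ)^(-p)) * zetaR p)) := by
          have := mul_lt_mul_of_pos_left h hpos
          linarith
  -- step 2 : get m with B < 2 * PP p m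
  have htend : Tendsto (fun n => PP p n) atTop (𝓝 (∑' d : ℕ, uu p d)) := by
    have := (summable_uu hp).hasSum.tendsto_sum_nat
    exact this
  have hev : ∀ᶠ m in atTop, B / 2 < PP p m :=
    htend.eventually_const_lt (by linarith)
  obtain ⟨m, hm⟩ := hev.exists
  have hmB : B < 2 * PP p m := by linarith
  -- step 3 : find n₀ ≥ 8 with B < gg p n₀ / n₀
  obtain ⟨K, hK⟩ := exists_nat_gt (2 * m * PP p m / (2 * PP p m - B))
  set n₀ : ℕ := K + m + 8 with hn₀
  have hmn₀ : m ≤ n₀ := by omega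
  have hn₀8 : 8 ≤ n₀ := by omega
  have hεpos : (0:ℝ) < 2 * PP p m - B := by linarith
  have hKn₀ : 2 * m * PP p m / (2 * PP p m - B) < (n₀:ℝ) := by
    have : (K:ℝ) ≤ n₀ := by exact_mod_cast (by omega : K ≤ n₀)
    linarith
  have hn₀big : 2 * (m:ℝ) * PP p m < (n₀:ℝ) * (2 * PP p m - B) := by
    rw [div_lt_iff₀ hεpos] at hKn₀
    linarith
  have hfn₀ : B < gg p n₀ / n₀ := by
    have hlow := gg_lower p hmn₀
    have hcast : ((n₀ - m : ℕ):ℝ) = (n₀:ℝ) - m := by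
      rw [Nat.cast_sub hmn₀]
    rw [hcast] at hlow
    rw [lt_div_iff₀ (by positivity : (0:ℝ) < (n₀:ℝ))]
    nlinarith
  -- step 4 : define N
  have hf7 : gg p 7 / 7 ≤ B := by
    have := g7_bound hp
    rw [hBdef, hc]
    linarith
  have h7n₀ : 7 < n₀ := by omega
  set S : Finset ℕ := (Finset.range n₀).filter (fun n => gg p n / n ≤ B) with hS
  have h7S : 7 ∈ S := by
    simp only [hS, Finset.mem_filter, Finset.mem_range]
    refine ⟨h7n₀, ?_⟩
    exact_mod_cast hf7
  have hSne : S.Nonempty := ⟨7, h7S⟩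
  set N : ℕ := S.max' hSne with hN
  have hN7 : 7 ≤ N := Finset.le_max' S 7 h7S
  have hNmem : N ∈ S := Finset.max'_mem S hSne
  have hNle : gg p N / N ≤ B := by
    simp only [hS, Finset.mem_filter] at hNmem
    exact hNmem.2
  have hN1 : B ≤ gg p (N+1) / ((N+1 : ℕ):ℝ) := by
    rcases Nat.lt_or_ge (N+1) n₀ with hlt | hge
    · by_contra hcon
      push_neg at hcon
      have : N + 1 ∈ S := by
        simp only [hS, Finset.mem_filter, Finset.mem_range]
        exact ⟨hlt, hcon.le⟩
      have := Finset.le_max' S (N+1) this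
      omega
    · exact le_trans hfn₀.le (ff_mono p hge)
  -- step 5 : rpow conversions
  have hlp : ∀ n : ℕ, 1 ≤ n → (n:ℝ) ^ (-(1/p)) * lpNorm n p = (gg p n / n) ^ (1/p) := by
    intro n hn
    have hnpos : (0:ℝ) < n := by exact_mod_cast hn
    rw [lpNorm, ← gg_eq, Real.div_rpow (gg_nonneg p n) hnpos.le,
      Real.rpow_neg hnpos.le]
    ring
  have hB4 : (4:ℝ) * c ^ (1/p) = B ^ (1/p) := by
    rw [hBdef, Real.mul_rpow (by positivity) hcpos.le]
    have h4 : ((4:ℝ)^p)^(1/p) = 4 := by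
      rw [← Real.rpow_mul (by norm_num : (0:ℝ) ≤ 4), mul_one_div,
        div_self (by linarith : p ≠ 0), Real.rpow_one]
    rw [h4]
  refine ⟨N, hN7, ?_, ?_⟩
  · intro n hn1 hnN
    rw [hlp n hn1, hB4]
    refine Real.rpow_le_rpow (div_nonneg (gg_nonneg p n) (Nat.cast_nonneg n)) ?_ (by positivity)
    exact le_trans (ff_mono p hnN) hNle
  · intro n hn
    have hn1 : 1 ≤ n := by omega
    rw [hlp n hn1, hB4]
    refine Real.rpow_le_rpow hBpos.le ?_ (by positivity)
    exact le_trans hN1 (ff_mono p hn)
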